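/- Let (X_i)_{i ∈ ℕ} be an i.i.d. sequence of real-valued random variables, let a ≤ b be reals, and set p_L = P(X_1 < a), p_U = P(X_1 > b) and p_max = max(p_L, p_U). Assume 0 < p_max < 1/2 and write r = 2·√(p_max(1-p_max)). Then there exist constants c_1, c_2 > 0 such that for every odd positive integer t, c_1 · t^{-1/2} · r^t ≤ P(Error_t) ≤ c_2 · t^{-1/2} · r^t. -/

import Mathlib

open MeasureTheory ProbabilityTheory

/-- The median of `t` reals: the `⌈t/2⌉`-th smallest among them. -/
noncomputable def median (t : ℕ) (x : Fin t → ℝ) : ℝ :=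
  ((Finset.univ.val.map x).sort (· ≤ ·)).getD ((t + 1) / 2 - 1) 0

/-- `Error_t`: the event that the median of `X_1, …, X_t` is `< a` or `> b`. -/
def errorEvent {Ω : Type*} (X : ℕ → Ω → ℝ) (a b : ℝ) (t : ℕ) : Set Ω :=
  {ω | median t (fun i : Fin t => X i ω) < a ∨ b < median t (fun i : Fin t => X i ω)}

set_option linter.unusedSectionVars false
set_option linter.unnecessarySeqFocus false
set_option maxHeartbeats 1000000

section ListLemmas

lemma sorted_getElem_lt_iff (a : ℝ) : ∀ (l : List ℝ), l.Pairwise (· ≤ ·) → ∀ i, (hi : i < l.length) →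
    (l[i] < a ↔ i < l.countP (fun y => decide (y < a)))
  | [], _, i, hi => by simp at hi
  | x :: xs, hl, 0, hi => by
      simp only [List.getElem_cons_zero, List.countP_cons]
      constructor
      · intro hx
        have : decide (x < a) = true := by simpa using hx
        simp [this]
      · intro h
        by_contra hx
        push_neg at hx
        have hxs : xs.countP (fun y => decide (y < a)) = 0 := by
          rw [List.countP_eq_zero]
          intro y hy
          simp only [decide_eq_true_eq, not_lt]
          exact le_trans hx ((List.pairwise_cons.mp hl).1 y hy)
        have hd : decide (x < a) = false := by simpa using not_lt.mpr hx
        rw [hxs, hd] at h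
        simp at h
  | x :: xs, hl, (i+1), hi => by
      have hxs : xs.Pairwise (· ≤ ·) := (List.pairwise_cons.mp hl).2
      have hi' : i < xs.length := by simpa using hi
      have IH := sorted_getElem_lt_iff a xs hxs i hi'
      simp only [List.getElem_cons_succ, List.countP_cons]
      by_cases hx : x < a
      · rw [IH]; simp [hx]
      · have hxs0 : xs.countP (fun y => decide (y < a)) = 0 := by
          rw [List.countP_eq_zero]
          intro y hy
          simp only [decide_eq_true_eq, not_lt]
          exact le_trans (not_lt.mp hx) ((List.pairwise_cons.mp hl).1 y hy)
        rw [IH]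
        simp [hxs0, hx]

lemma sorted_lt_getElem_iff (b : ℝ) : ∀ (l : List ℝ), l.Pairwise (· ≤ ·) → ∀ i, (hi : i < l.length) →
    (b < l[i] ↔ l.length ≤ i + l.countP (fun y => decide (b < y)))
  | [], _, i, hi => by simp at hi
  | x :: xs, hl, i, hi => by
      have hxs : xs.Pairwise (· ≤ ·) := (List.pairwise_cons.mp hl).2
      by_cases hx : b < x
      · have hall : ∀ y ∈ x :: xs, b < y := by
          intro y hy
          rcases List.mem_cons.mp hy with rfl | hy
          · exact hx
          · exact lt_of_lt_of_le hx ((List.pairwise_cons.mp hl).1 y hy)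
        have hcount : (x :: xs).countP (fun y => decide (b < y)) = (x :: xs).length := by
          rw [List.countP_eq_length]
          intro y hy; simpa using hall y hy
        rw [hcount]
        constructor
        · intro _; omega
        · intro _
          exact hall _ (List.getElem_mem hi)
      · cases i with
        | zero =>
          simp only [List.getElem_cons_zero, List.countP_cons]
          have hd : (decide (b < x)) = false := by simpa using hx
          rw [hd]
          constructor
          · intro h; exact absurd h hx
          · intro h
            exfalso
            have := List.countP_le_length (l := xs) (p := fun y => decide (b < y))
            simp only [Bool.false_eq_true, if_false, add_zero, List.length_cons, zero_add] at h
            omega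
        | succ i =>
          have hi' : i < xs.length := by simpa using hi
          have IH := sorted_lt_getElem_iff b xs hxs i hi'
          simp only [List.getElem_cons_succ, List.countP_cons, List.length_cons]
          have hd : (decide (b < x)) = false := by simpa using hx
          rw [IH, hd]
          simp only [if_false, Bool.false_eq_true, add_zero]
          omega

end ListLemmas

section median

variable {t m : ℕ} (x : Fin t → ℝ)

lemma median_list_length : ((Finset.univ.val.map x).sort (· ≤ ·)).length = t := by
  rw [Multiset.length_sort, Multiset.card_map]
  simp

lemma median_list_countP (p : ℝ → Prop) [DecidablePred p] :
    ((Finset.univ.val.map x).sort (· ≤ ·)).countP (fun y => decide (p y))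
      = (Finset.univ.filter (fun i => p (x i))).card := by
  have h1 : ((Finset.univ.val.map x).sort (· ≤ ·)).countP (fun y => decide (p y))
      = Multiset.countP p (Finset.univ.val.map x) := by
    rw [← Multiset.coe_countP]
    congr 1
    exact Multiset.sort_eq _ _
  rw [h1, Multiset.countP_map]
  rfl

lemma median_lt_iff (ht : t = 2 * m + 1) (a : ℝ) :
    (median t x < a ↔ m + 1 ≤ (Finset.univ.filter (fun i => x i < a)).card) := by
  have hlen := median_list_length x
  have hidx : (t + 1) / 2 - 1 = m := by omega
  have hm : m < ((Finset.univ.val.map x).sort (· ≤ ·)).length := by rw [hlen]; omega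
  rw [median, hidx, List.getD_eq_getElem _ _ hm,
    sorted_getElem_lt_iff a _ (Multiset.pairwise_sort _ _) m hm,
    median_list_countP x (fun y => y < a)]
  omega

lemma median_gt_iff (ht : t = 2 * m + 1) (b : ℝ) :
    (b < median t x ↔ m + 1 ≤ (Finset.univ.filter (fun i => b < x i)).card) := by
  have hlen := median_list_length x
  have hidx : (t + 1) / 2 - 1 = m := by omega
  have hm : m < ((Finset.univ.val.map x).sort (· ≤ ·)).length := by rw [hlen]; omega
  rw [median, hidx, List.getD_eq_getElem _ _ hm,
    sorted_lt_getElem_iff b _ (Multiset.pairwise_sort _ _) m hm,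
    median_list_countP x (fun y => b < y), hlen]
  omega

end median

lemma errorEvent_eq {Ω : Type*} (X : ℕ → Ω → ℝ) (a b : ℝ) {t m : ℕ} (ht : t = 2 * m + 1) :
    errorEvent X a b t =
      {ω | m + 1 ≤ (Finset.univ.filter (fun i : Fin t => X i ω < a)).card} ∪
      {ω | m + 1 ≤ (Finset.univ.filter (fun i : Fin t => b < X i ω)).card} := by
  ext ω
  simp only [errorEvent, Set.mem_setOf_eq, Set.mem_union]
  rw [median_lt_iff _ ht, median_gt_iff _ ht]


section Stirling
open Real Nat


lemma stirling_lower (n : ℕ) (hn : 1 ≤ n) : Real.sqrt π ≤ Stirling.stirlingSeq n := by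
  obtain ⟨m, rfl⟩ := Nat.exists_eq_add_of_le hn
  have h1 : Filter.Tendsto (fun k => Stirling.stirlingSeq (k + 1)) Filter.atTop
      (nhds (Real.sqrt π)) := by
    have := Stirling.tendsto_stirlingSeq_sqrt_pi
    exact this.comp (Filter.tendsto_add_atTop_nat 1)
  have h2 : Antitone (fun k => Stirling.stirlingSeq (k + 1)) := by
    intro i j hij
    exact Stirling.stirlingSeq'_antitone hij
  have := h2.le_of_tendsto h1 m
  simpa [Nat.add_comm] using this

lemma stirling_upper (n : ℕ) (hn : 1 ≤ n) :
    Stirling.stirlingSeq n ≤ Real.exp 1 / Real.sqrt 2 := by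
  obtain ⟨m, rfl⟩ := Nat.exists_eq_add_of_le hn
  have h2 : Antitone (fun k => Stirling.stirlingSeq (k + 1)) := by
    intro i j hij
    exact Stirling.stirlingSeq'_antitone hij
  have := h2 (Nat.zero_le m)
  simpa [Nat.add_comm, Stirling.stirlingSeq_one] using this

lemma factorial_eq_stirling (n : ℕ) (hn : 1 ≤ n) :
    (n ! : ℝ) = Stirling.stirlingSeq n * (Real.sqrt (2 * n) * ((n : ℝ) / Real.exp 1) ^ n) := by
  have hpos : (0 : ℝ) < Real.sqrt (2 * n) * ((n : ℝ) / Real.exp 1) ^ n := by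
    have hn' : (0 : ℝ) < n := by exact_mod_cast hn
    positivity
  rw [Stirling.stirlingSeq]
  field_simp

lemma centralBinom_eq (n : ℕ) (hn : 1 ≤ n) :
    (n.centralBinom : ℝ) = Stirling.stirlingSeq (2 * n) / (Stirling.stirlingSeq n) ^ 2
      * (4 ^ n / Real.sqrt n) := by
  have hn' : (0 : ℝ) < n := by exact_mod_cast hn
  have hs : (0 : ℝ) < Real.sqrt n := Real.sqrt_pos.mpr hn'
  have hu : (0 : ℝ) < ((n : ℝ) / Real.exp 1) ^ n := by positivity
  have han : 0 < Stirling.stirlingSeq n := by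
    obtain ⟨m, rfl⟩ := Nat.exists_eq_add_of_le hn
    simpa [Nat.add_comm] using Stirling.stirlingSeq'_pos m
  have hcast : (n.centralBinom : ℝ) = ((2 * n)! : ℝ) / ((n ! : ℝ) * (n ! : ℝ)) := by
    rw [Nat.centralBinom, Nat.cast_choose ℝ (by omega : n ≤ 2 * n),
      show 2 * n - n = n from by omega]
  have h2n : ((2 * n)! : ℝ) = Stirling.stirlingSeq (2 * n)
      * (2 * Real.sqrt n * (4 ^ n * (((n : ℝ) / Real.exp 1) ^ n) ^ 2)) := by
    rw [factorial_eq_stirling (2 * n) (by omega)]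
    congr 1
    have hsqrt : Real.sqrt (2 * (2 * n : ℕ)) = 2 * Real.sqrt n := by
      push_cast
      rw [show (2 : ℝ) * (2 * n) = 4 * n by ring, show (4 : ℝ) = 2 ^ 2 by norm_num,
        Real.sqrt_mul (by positivity), Real.sqrt_sq (by norm_num)]
    have hpow : (((2 * n : ℕ) : ℝ) / Real.exp 1) ^ (2 * n)
        = 4 ^ n * (((n : ℝ) / Real.exp 1) ^ n) ^ 2 := by
      push_cast
      rw [show ((2 : ℝ) * n) / Real.exp 1 = 2 * ((n : ℝ) / Real.exp 1) by ring,
        mul_pow, ← pow_mul, show n * 2 = 2 * n from by ring,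
        show (4:ℝ) ^ n = 2 ^ (2 * n) from by
          rw [show (4:ℝ) = 2 ^ 2 by norm_num, ← pow_mul]]
    rw [hsqrt, hpow]
  have hnn : ((n)! : ℝ) = Stirling.stirlingSeq n
      * (Real.sqrt 2 * Real.sqrt n * ((n : ℝ) / Real.exp 1) ^ n) := by
    rw [factorial_eq_stirling n hn]
    congr 1
    rw [Real.sqrt_mul (by norm_num : (0:ℝ) ≤ 2)]
  rw [hcast, h2n, hnn]
  have hsq2 : Real.sqrt 2 * Real.sqrt 2 = 2 := Real.mul_self_sqrt (by norm_num)
  have hsn : Real.sqrt n * Real.sqrt n = n := Real.mul_self_sqrt (le_of_lt hn')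
  have hB : Stirling.stirlingSeq n ≠ 0 := ne_of_gt han
  have hs' : Real.sqrt (n:ℝ) ≠ 0 := ne_of_gt hs
  have hu' : ((n : ℝ) / Real.exp 1) ^ n ≠ 0 := ne_of_gt hu
  have h2 : Real.sqrt 2 ≠ 0 := by positivity
  field_simp
  ring_nf
  rw [Real.sq_sqrt (show (0:ℝ) ≤ 2 by norm_num)]

lemma centralBinom_lower (n : ℕ) (hn : 1 ≤ n) :
    Real.sqrt π / (Real.exp 1 / Real.sqrt 2) ^ 2 * (4 ^ n / Real.sqrt n)
      ≤ (n.centralBinom : ℝ) := by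
  rw [centralBinom_eq n hn]
  have hn' : (0 : ℝ) < n := by exact_mod_cast hn
  have hfac : (0:ℝ) < 4 ^ n / Real.sqrt n := by positivity
  apply mul_le_mul_of_nonneg_right _ (le_of_lt hfac)
  have h1 : Real.sqrt π ≤ Stirling.stirlingSeq (2 * n) := stirling_lower _ (by omega)
  have h2 : Stirling.stirlingSeq n ≤ Real.exp 1 / Real.sqrt 2 := stirling_upper n hn
  have han : 0 < Stirling.stirlingSeq n := by
    obtain ⟨m, rfl⟩ := Nat.exists_eq_add_of_le hn
    simpa [Nat.add_comm] using Stirling.stirlingSeq'_pos m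
  have hq : (0:ℝ) < (Stirling.stirlingSeq n) ^ 2 := by positivity
  exact div_le_div₀ (le_trans (Real.sqrt_nonneg π) h1) h1 hq
    (pow_le_pow_left₀ (le_of_lt han) h2 2)

lemma centralBinom_upper (n : ℕ) (hn : 1 ≤ n) :
    (n.centralBinom : ℝ) ≤ (Real.exp 1 / Real.sqrt 2) / π * (4 ^ n / Real.sqrt n) := by
  rw [centralBinom_eq n hn]
  have hn' : (0 : ℝ) < n := by exact_mod_cast hn
  have hfac : (0:ℝ) < 4 ^ n / Real.sqrt n := by positivity
  apply mul_le_mul_of_nonneg_right _ (le_of_lt hfac)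
  have h1 : Stirling.stirlingSeq (2 * n) ≤ Real.exp 1 / Real.sqrt 2 :=
    stirling_upper _ (by omega)
  have h2 : Real.sqrt π ≤ Stirling.stirlingSeq n := stirling_lower n hn
  have hpi : (0:ℝ) < π := Real.pi_pos
  have hsq : (Real.sqrt π) ^ 2 = π := Real.sq_sqrt (le_of_lt hpi)
  have hpos : (0:ℝ) < (Stirling.stirlingSeq n) ^ 2 := by
    have : (0:ℝ) < Real.sqrt π := Real.sqrt_pos.mpr hpi
    nlinarith
  refine div_le_div₀ (by positivity) h1 hpi ?_
  calc π = (Real.sqrt π) ^ 2 := hsq.symm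
    _ ≤ (Stirling.stirlingSeq n) ^ 2 := pow_le_pow_left₀ (Real.sqrt_nonneg π) h2 2

end Stirling

section Choose
open Real Finset


lemma choose_odd_ge (m : ℕ) : m.centralBinom ≤ (2 * m + 1).choose (m + 1) := by
  have h := Nat.add_one_mul_choose_eq (2 * m) m
  have h2 : (2 * m).succ = 2 * m + 1 := rfl
  rw [Nat.centralBinom]
  have hkey : (2 * m + 1) * (2 * m).choose m = (2 * m + 1).choose (m + 1) * (m + 1) := by
    simpa using h
  nlinarith [Nat.choose_pos (show m ≤ 2 * m by omega)]

lemma choose_odd_le (m : ℕ) : (2 * m + 1).choose (m + 1) ≤ 2 * m.centralBinom := by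
  have h := Nat.add_one_mul_choose_eq (2 * m) m
  rw [Nat.centralBinom]
  have hkey : (2 * m + 1) * (2 * m).choose m = (2 * m + 1).choose (m + 1) * (m + 1) := by
    simpa using h
  nlinarith [Nat.choose_pos (show m + 1 ≤ 2 * m + 1 by omega)]

lemma choose_le_odd_middle (m j : ℕ) : (2 * m + 1).choose j ≤ (2 * m + 1).choose (m + 1) := by
  have h := Nat.choose_le_middle j (2 * m + 1)
  have : (2 * m + 1) / 2 = m := by omega
  rw [this] at h
  rw [Nat.choose_symm_half m]
  exact h

lemma geom_tail (ρ : ℝ) (h0 : 0 ≤ ρ) (h1 : ρ < 1) (n : ℕ) :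
    ∑ i ∈ range n, ρ ^ i ≤ 1 / (1 - ρ) := by
  rw [geom_sum_eq (ne_of_lt h1) n]
  have h2 : 0 < 1 - ρ := by linarith
  have hle : (ρ ^ n - 1) / (ρ - 1) = (1 - ρ ^ n) / (1 - ρ) := by
    rw [div_eq_div_iff (by linarith) (by linarith)]
    ring
  rw [hle, div_le_div_iff₀ h2 h2]
  have : 0 ≤ ρ ^ n := pow_nonneg h0 n
  nlinarith

lemma binom_tail_le (m : ℕ) (p pm : ℝ) (hp0 : 0 ≤ p) (hppm : p ≤ pm) (hpm : pm < 1 / 2) :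
    ∑ j ∈ Finset.Icc (m + 1) (2 * m + 1), ((2 * m + 1).choose j : ℝ) * p ^ j * (1 - p) ^ (2 * m + 1 - j)
      ≤ (1 / (1 - 2 * pm)) * ((2 * m + 1).choose (m + 1) : ℝ) * (pm ^ (m + 1) * (1 - pm) ^ m) := by
  have hq : (0:ℝ) < 1 - p := by linarith
  have hqm : (0:ℝ) < 1 - pm := by linarith
  have h2pm : (0:ℝ) < 1 - 2 * pm := by linarith
  set ρ : ℝ := p / (1 - p) with hρ
  have hρ0 : 0 ≤ ρ := div_nonneg hp0 (le_of_lt hq)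
  have hρ1 : ρ < 1 := by
    rw [div_lt_one hq]; linarith
  have hsum : ∑ j ∈ Finset.Icc (m + 1) (2 * m + 1),
        ((2 * m + 1).choose j : ℝ) * p ^ j * (1 - p) ^ (2 * m + 1 - j)
      = ∑ i ∈ Finset.range (m + 1),
        ((2 * m + 1).choose (m + 1 + i) : ℝ) * p ^ (m + 1 + i) * (1 - p) ^ (m - i) := by
    rw [show Finset.Icc (m + 1) (2 * m + 1) = Finset.Ico (m + 1) (2 * m + 2) from by
      ext j; simp only [Finset.mem_Icc, Finset.mem_Ico]; omega, Finset.sum_Ico_eq_sum_range]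
    refine Finset.sum_congr (by congr 1 <;> omega) fun i hi => ?_
    have h : 2 * m + 1 - (m + 1 + i) = m - i := by omega
    rw [h]
  rw [hsum]
  have hterm : ∀ i ∈ Finset.range (m + 1),
      ((2 * m + 1).choose (m + 1 + i) : ℝ) * p ^ (m + 1 + i) * (1 - p) ^ (m - i)
        ≤ ((2 * m + 1).choose (m + 1) : ℝ) * (p ^ (m + 1) * (1 - p) ^ m) * ρ ^ i := by
    intro i hi
    simp only [Finset.mem_range] at hi
    have hc : ((2 * m + 1).choose (m + 1 + i) : ℝ) ≤ ((2 * m + 1).choose (m + 1) : ℝ) := by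
      exact_mod_cast choose_le_odd_middle m (m + 1 + i)
    have hident : p ^ (m + 1 + i) * (1 - p) ^ (m - i) = p ^ (m + 1) * (1 - p) ^ m * ρ ^ i := by
      have hpow : (1 - p) ^ (m - i) * (1 - p) ^ i = (1 - p) ^ m := by
        rw [← pow_add]; congr 1; omega
      have hne : (1 - p) ^ i ≠ 0 := by positivity
      rw [hρ, div_pow, pow_add]
      field_simp
      calc p ^ (m + 1) * p ^ i * (1 - p) ^ (m - i) * (1 - p) ^ i
          = p ^ (m + 1) * p ^ i * ((1 - p) ^ (m - i) * (1 - p) ^ i) := by ring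
        _ = p ^ (m + 1) * p ^ i * (1 - p) ^ m := by rw [hpow]
        _ = _ := by ring
    calc ((2 * m + 1).choose (m + 1 + i) : ℝ) * p ^ (m + 1 + i) * (1 - p) ^ (m - i)
        = ((2 * m + 1).choose (m + 1 + i) : ℝ) * (p ^ (m + 1 + i) * (1 - p) ^ (m - i)) := by ring
      _ ≤ ((2 * m + 1).choose (m + 1) : ℝ) * (p ^ (m + 1 + i) * (1 - p) ^ (m - i)) := by
          apply mul_le_mul_of_nonneg_right hc; positivity
      _ = ((2 * m + 1).choose (m + 1) : ℝ) * (p ^ (m + 1) * (1 - p) ^ m * ρ ^ i) := by rw [hident]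
      _ = _ := by ring
  calc ∑ i ∈ Finset.range (m + 1),
        ((2 * m + 1).choose (m + 1 + i) : ℝ) * p ^ (m + 1 + i) * (1 - p) ^ (m - i)
      ≤ ∑ i ∈ Finset.range (m + 1),
        ((2 * m + 1).choose (m + 1) : ℝ) * (p ^ (m + 1) * (1 - p) ^ m) * ρ ^ i :=
        Finset.sum_le_sum hterm
    _ = ((2 * m + 1).choose (m + 1) : ℝ) * (p ^ (m + 1) * (1 - p) ^ m)
        * ∑ i ∈ Finset.range (m + 1), ρ ^ i := by rw [Finset.mul_sum]
    _ ≤ ((2 * m + 1).choose (m + 1) : ℝ) * (p ^ (m + 1) * (1 - p) ^ m) * (1 / (1 - ρ)) := by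
        apply mul_le_mul_of_nonneg_left (geom_tail ρ hρ0 hρ1 (m + 1)); positivity
    _ ≤ _ := by
        have h2p : (0:ℝ) < 1 - 2 * p := by linarith
        have h1ρ : 1 / (1 - ρ) = (1 - p) / (1 - 2 * p) := by
          rw [hρ, show 1 - p / (1 - p) = (1 - 2 * p) / (1 - p) from by
            field_simp; ring]
          rw [one_div_div]
        rw [h1ρ]
        have hkey : p ^ (m + 1) * (1 - p) ^ m * ((1 - p) / (1 - 2 * p))
            ≤ pm ^ (m + 1) * (1 - pm) ^ m * (1 / (1 - 2 * pm)) := by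
          have hpq : p * (1 - p) ≤ pm * (1 - pm) := by nlinarith
          have h2 : (p * (1 - p)) ^ m ≤ (pm * (1 - pm)) ^ m :=
            pow_le_pow_left₀ (by positivity) hpq m
          have h3 : p ^ (m + 1) * (1 - p) ^ m * ((1 - p) / (1 - 2 * p))
              = (p * (1 - p)) ^ m * (p * (1 - p)) / (1 - 2 * p) := by
            rw [mul_pow]; field_simp; ring
          rw [h3]
          have hpp : (0:ℝ) ≤ p * (1 - p) := mul_nonneg hp0 hq.le
          have hpmpm : (0:ℝ) ≤ pm * (1 - pm) := mul_nonneg (hp0.trans hppm) hqm.le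
          have h4 : (p * (1 - p)) ^ m * (p * (1 - p)) / (1 - 2 * p)
              ≤ (pm * (1 - pm)) ^ m * (pm * (1 - pm)) / (1 - 2 * pm) := by
            apply div_le_div₀ (mul_nonneg (pow_nonneg hpmpm m) hpmpm) ?_ h2pm (by linarith)
            exact mul_le_mul h2 hpq hpp (pow_nonneg hpmpm m)
          refine h4.trans ?_
          have hpm0 : (0:ℝ) ≤ pm := hp0.trans hppm
          have heq : (pm * (1 - pm)) ^ m * (pm * (1 - pm)) / (1 - 2 * pm)
              = pm ^ (m + 1) * (1 - pm) ^ m * (1 - pm) / (1 - 2 * pm) := by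
            rw [mul_pow, pow_succ]; ring
          rw [heq]
          have hstep : pm ^ (m + 1) * (1 - pm) ^ m * (1 - pm)
              ≤ pm ^ (m + 1) * (1 - pm) ^ m * 1 := by
            apply mul_le_mul_of_nonneg_left (by linarith)
            exact mul_nonneg (pow_nonneg hpm0 _) (pow_nonneg hqm.le _)
          calc pm ^ (m + 1) * (1 - pm) ^ m * (1 - pm) / (1 - 2 * pm)
              ≤ pm ^ (m + 1) * (1 - pm) ^ m * 1 / (1 - 2 * pm) :=
                by gcongr
            _ = pm ^ (m + 1) * (1 - pm) ^ m * (1 / (1 - 2 * pm)) := by ring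
        calc ((2 * m + 1).choose (m + 1) : ℝ) * (p ^ (m + 1) * (1 - p) ^ m) * ((1 - p) / (1 - 2 * p))
            = ((2 * m + 1).choose (m + 1) : ℝ) * (p ^ (m + 1) * (1 - p) ^ m * ((1 - p) / (1 - 2 * p))) := by ring
          _ ≤ ((2 * m + 1).choose (m + 1) : ℝ) * (pm ^ (m + 1) * (1 - pm) ^ m * (1 / (1 - 2 * pm))) := by
              apply mul_le_mul_of_nonneg_left hkey (by positivity)
          _ = _ := by ring

end Choose

section Prob


variable {Ω : Type*} [MeasurableSpace Ω] (μ : Measure Ω) [IsProbabilityMeasure μ]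
  (X : ℕ → Ω → ℝ) (hmeas : ∀ i, Measurable (X i))
  (hindep : iIndepFun X μ)
  (hident : ∀ i, Measure.map (X i) μ = Measure.map (X 0) μ)

include hmeas hindep hident in
lemma meas_preimage_eq (i : ℕ) {S : Set ℝ} (hS : MeasurableSet S) :
    μ (X i ⁻¹' S) = μ (X 0 ⁻¹' S) := by
  rw [← Measure.map_apply (hmeas i) hS, hident i, Measure.map_apply (hmeas 0) hS]

include hmeas hindep hident in
lemma meas_pattern (t : ℕ) (P : ℝ → Prop) (hS : MeasurableSet {x | P x}) (T : Finset (Fin t)) :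
    μ {ω | ∀ i : Fin t, (P (X i ω) ↔ i ∈ T)}
      = μ (X 0 ⁻¹' {x | P x}) ^ T.card * μ (X 0 ⁻¹' {x | P x}ᶜ) ^ (t - T.card) := by
  classical
  set S : Set ℝ := {x | P x} with hSdef
  set U : ℕ → Set ℝ := fun n => if ∃ hn : n < t, (⟨n, hn⟩ : Fin t) ∈ T then S else Sᶜ with hU
  have hUm : ∀ n, MeasurableSet (U n) := by
    intro n
    rw [hU]
    dsimp only
    split <;> [exact hS; exact hS.compl]
  have hA : {ω | ∀ i : Fin t, (P (X i ω) ↔ i ∈ T)} = ⋂ n ∈ Finset.range t, X n ⁻¹' U n := by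
    ext ω
    simp only [Set.mem_setOf_eq, Set.mem_iInter, Finset.mem_range, Set.mem_preimage]
    constructor
    · intro h n hn
      rw [hU]
      dsimp only
      split
      · next hc =>
          obtain ⟨hn', hmem⟩ := hc
          exact (h ⟨n, hn'⟩).mpr hmem
      · next hc =>
          push_neg at hc
          intro hmem
          exact hc hn ((h ⟨n, hn⟩).mp hmem)
    · intro h i
      have := h i.1 i.2
      rw [hU] at this
      dsimp only at this
      constructor
      · intro hP
        by_contra hiT
        rw [if_neg] at this
        · exact this hP
        · push_neg
          intro h1
          convert hiT
      · intro hiT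
        rw [if_pos ⟨i.2, by convert hiT⟩] at this
        exact this
  rw [hA, hindep.measure_inter_preimage_eq_mul (Finset.range t) (fun i _ => hUm i)]
  have hfac : ∀ n, μ (X n ⁻¹' U n) = if ∃ hn : n < t, (⟨n, hn⟩ : Fin t) ∈ T
      then μ (X 0 ⁻¹' S) else μ (X 0 ⁻¹' Sᶜ) := by
    intro n
    rw [meas_preimage_eq μ X hmeas hindep hident n (hUm n), hU]
    dsimp only
    split <;> rfl
  simp only [hfac]
  rw [← Fin.prod_univ_eq_prod_range (fun n => if ∃ hn : n < t, (⟨n, hn⟩ : Fin t) ∈ T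
      then μ (X 0 ⁻¹' S) else μ (X 0 ⁻¹' Sᶜ)) t]
  have hcond : ∀ i : Fin t, (∃ hn : i.1 < t, (⟨i.1, hn⟩ : Fin t) ∈ T) ↔ i ∈ T := by
    intro i
    constructor
    · rintro ⟨hn, h⟩; convert h
    · intro h; exact ⟨i.2, by convert h⟩
  have : ∀ i : Fin t, (if ∃ hn : i.1 < t, (⟨i.1, hn⟩ : Fin t) ∈ T
      then μ (X 0 ⁻¹' S) else μ (X 0 ⁻¹' Sᶜ)) = if i ∈ T then μ (X 0 ⁻¹' S) else μ (X 0 ⁻¹' Sᶜ) := by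
    intro i
    by_cases h : i ∈ T
    · rw [if_pos ((hcond i).mpr h), if_pos h]
    · rw [if_neg (fun hc => h ((hcond i).mp hc)), if_neg h]
  rw [Finset.prod_congr rfl (fun i _ => this i), Finset.prod_ite, Finset.prod_const,
    Finset.prod_const]
  have h1 : Finset.univ.filter (fun i => i ∈ T) = T := by ext i; simp
  have h2 : Finset.univ.filter (fun i : Fin t => ¬ i ∈ T) = Tᶜ := by ext i; simp
  rw [h1, h2, Finset.card_compl, Fintype.card_fin]

include hmeas hindep hident in
lemma meas_count (t j : ℕ) (P : ℝ → Prop) [DecidablePred P] (hS : MeasurableSet {x | P x}) :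
    μ {ω | (Finset.univ.filter (fun i : Fin t => P (X i ω))).card = j}
      = (t.choose j) * μ (X 0 ⁻¹' {x | P x}) ^ j * μ (X 0 ⁻¹' {x | P x}ᶜ) ^ (t - j) := by
  classical
  have hA : {ω | (Finset.univ.filter (fun i : Fin t => P (X i ω))).card = j}
      = ⋃ T ∈ Finset.powersetCard j (Finset.univ : Finset (Fin t)),
          {ω | ∀ i : Fin t, (P (X i ω) ↔ i ∈ T)} := by
    ext ω
    simp only [Set.mem_setOf_eq, Set.mem_iUnion, Finset.mem_powersetCard]
    constructor
    · intro h
      refine ⟨Finset.univ.filter (fun i : Fin t => P (X i ω)), ⟨⟨Finset.subset_univ _, h⟩, ?_⟩⟩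
      intro i; simp
    · rintro ⟨T, ⟨⟨-, hcard⟩, hT⟩⟩
      rw [← hcard]
      congr 1
      ext i
      simp [hT i]
  have hmp : ∀ T : Finset (Fin t), MeasurableSet {ω | ∀ i : Fin t, (P (X i ω) ↔ i ∈ T)} := by
    intro T
    have : {ω | ∀ i : Fin t, (P (X i ω) ↔ i ∈ T)}
        = ⋂ i : Fin t, (X i ⁻¹' (if i ∈ T then {x | P x} else {x | P x}ᶜ)) := by
      ext ω
      simp only [Set.mem_setOf_eq, Set.mem_iInter, Set.mem_preimage]
      refine forall_congr' fun i => ?_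
      by_cases h : i ∈ T <;> simp [h]
    rw [this]
    exact MeasurableSet.iInter fun i =>
      (hmeas i) (by split <;> [exact hS; exact hS.compl])
  have hdisj : Set.PairwiseDisjoint
      (↑(Finset.powersetCard j (Finset.univ : Finset (Fin t))))
      (fun T : Finset (Fin t) => {ω | ∀ i : Fin t, (P (X i ω) ↔ i ∈ T)}) := by
    intro T₁ _ T₂ _ hne
    refine Set.disjoint_left.mpr ?_
    intro ω h1 h2
    apply hne
    ext i
    rw [← h1 i, h2 i]
  rw [hA, measure_biUnion_finset hdisj (fun T _ => hmp T)]
  have hsum : ∀ T ∈ Finset.powersetCard j (Finset.univ : Finset (Fin t)),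
      μ {ω | ∀ i : Fin t, (P (X i ω) ↔ i ∈ T)}
        = μ (X 0 ⁻¹' {x | P x}) ^ j * μ (X 0 ⁻¹' {x | P x}ᶜ) ^ (t - j) := by
    intro T hT
    rw [meas_pattern μ X hmeas hindep hident t P hS T,
      (Finset.mem_powersetCard.mp hT).2]
  rw [Finset.sum_congr rfl hsum, Finset.sum_const, Finset.card_powersetCard,
    Finset.card_univ, Fintype.card_fin, nsmul_eq_mul, mul_assoc]

include hmeas hindep hident in
lemma count_eq_real (t j : ℕ) (P : ℝ → Prop) [DecidablePred P] (hS : MeasurableSet {x | P x}) :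
    (μ {ω | (Finset.univ.filter (fun i : Fin t => P (X i ω))).card = j}).toReal
      = (t.choose j : ℝ) * ((μ (X 0 ⁻¹' {x | P x})).toReal) ^ j
        * (1 - (μ (X 0 ⁻¹' {x | P x})).toReal) ^ (t - j) := by
  rw [meas_count μ X hmeas hindep hident t j P hS]
  have h1 : μ (X 0 ⁻¹' {x | P x}ᶜ) = 1 - μ (X 0 ⁻¹' {x | P x}) := by
    rw [Set.preimage_compl]
    exact prob_compl_eq_one_sub ((hmeas 0) hS)
  have hfin : μ (X 0 ⁻¹' {x | P x}) ≠ ⊤ := measure_ne_top μ _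
  have hle : μ (X 0 ⁻¹' {x | P x}) ≤ 1 := prob_le_one
  rw [h1, ENNReal.toReal_mul, ENNReal.toReal_mul, ENNReal.toReal_pow, ENNReal.toReal_pow,
    ENNReal.toReal_sub_of_le hle (by simp), ENNReal.toReal_one]
  norm_num

include hmeas hindep hident in
lemma branch_tail_real (m : ℕ) (P : ℝ → Prop) [DecidablePred P] (hS : MeasurableSet {x | P x}) :
    (μ {ω | m + 1 ≤ (Finset.univ.filter (fun i : Fin (2 * m + 1) => P (X i ω))).card}).toReal
      ≤ ∑ j ∈ Finset.Icc (m + 1) (2 * m + 1),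
          ((2 * m + 1).choose j : ℝ) * ((μ (X 0 ⁻¹' {x | P x})).toReal) ^ j
            * (1 - (μ (X 0 ⁻¹' {x | P x})).toReal) ^ (2 * m + 1 - j) := by
  set t := 2 * m + 1 with ht
  have hsub : {ω | m + 1 ≤ (Finset.univ.filter (fun i : Fin t => P (X i ω))).card}
      ⊆ ⋃ j ∈ Finset.Icc (m + 1) t,
          {ω | (Finset.univ.filter (fun i : Fin t => P (X i ω))).card = j} := by
    intro ω hω
    simp only [Set.mem_setOf_eq] at hω
    have hcard : (Finset.univ.filter (fun i : Fin t => P (X i ω))).card ≤ t := by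
      refine le_trans (Finset.card_le_card (Finset.subset_univ _)) ?_
      simp [ht]
    simp only [Set.mem_iUnion, Finset.mem_Icc]
    exact ⟨_, ⟨hω, hcard⟩, rfl⟩
  have hmono : μ {ω | m + 1 ≤ (Finset.univ.filter (fun i : Fin t => P (X i ω))).card}
      ≤ ∑ j ∈ Finset.Icc (m + 1) t,
          μ {ω | (Finset.univ.filter (fun i : Fin t => P (X i ω))).card = j} :=
    le_trans (measure_mono hsub) (measure_biUnion_finset_le _ _)
  have hfin : (∑ j ∈ Finset.Icc (m + 1) t,
      μ {ω | (Finset.univ.filter (fun i : Fin t => P (X i ω))).card = j}) ≠ ⊤ := by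
    refine (ENNReal.sum_lt_top.mpr fun j _ => ?_).ne
    exact (measure_lt_top μ _)
  refine le_trans (ENNReal.toReal_mono hfin hmono) ?_
  rw [ENNReal.toReal_sum (fun j _ => measure_ne_top μ _)]
  refine le_of_eq (Finset.sum_congr rfl fun j _ => ?_)
  exact count_eq_real μ X hmeas hindep hident t j P hS

end Prob
theorem stmt_4 {Ω : Type*} [MeasurableSpace Ω] (μ : Measure Ω) [IsProbabilityMeasure μ]
    (X : ℕ → Ω → ℝ) (hmeas : ∀ i, Measurable (X i))
    (hindep : iIndepFun X μ)
    (hident : ∀ i, Measure.map (X i) μ = Measure.map (X 0) μ)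
    (a b : ℝ) (hab : a ≤ b)
    (pL pU pmax r : ℝ)
    (hpL : pL = (μ {ω | X 0 ω < a}).toReal)
    (hpU : pU = (μ {ω | b < X 0 ω}).toReal)
    (hpmax : pmax = max pL pU)
    (hr : r = 2 * Real.sqrt (pmax * (1 - pmax)))
    (hpmax0 : 0 < pmax) (hpmax1 : pmax < 1 / 2) :
    ∃ c₁ c₂ : ℝ, 0 < c₁ ∧ 0 < c₂ ∧ ∀ t : ℕ, Odd t → 0 < t →
      c₁ / Real.sqrt t * r ^ t ≤ (μ (errorEvent X a b t)).toReal ∧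
        (μ (errorEvent X a b t)).toReal ≤ c₂ / Real.sqrt t * r ^ t := by
  have hqm : (0:ℝ) < 1 - pmax := by linarith
  have hpmqm : (0:ℝ) < pmax * (1 - pmax) := mul_pos hpmax0 hqm
  have hr0 : 0 < r := by rw [hr]; positivity
  have hr2 : r ^ 2 = 4 * (pmax * (1 - pmax)) := by
    rw [hr, mul_pow, Real.sq_sqrt hpmqm.le]; ring
  set qm : ℝ := 1 - pmax with hqmdef
  set d₁ : ℝ := Real.sqrt Real.pi / (Real.exp 1 / Real.sqrt 2) ^ 2 with hd₁def
  set d₂ : ℝ := (Real.exp 1 / Real.sqrt 2) / Real.pi with hd₂def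
  set K : ℝ := 1 / (1 - 2 * pmax) with hKdef
  have hpi : (0:ℝ) < Real.pi := Real.pi_pos
  have hd₁ : 0 < d₁ := by
    rw [hd₁def]
    have h1 : 0 < Real.sqrt Real.pi := Real.sqrt_pos.mpr hpi
    have h2 : 0 < Real.exp 1 / Real.sqrt 2 := by positivity
    positivity
  have hd₂ : 0 < d₂ := by
    rw [hd₂def]
    have h2 : 0 < Real.exp 1 := Real.exp_pos 1
    positivity
  have h2pm : (0:ℝ) < 1 - 2 * pmax := by linarith
  have hK : 0 < K := by rw [hKdef]; positivity
  set c₁ : ℝ := min (d₁ * pmax / r) (pmax / r) with hc₁def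
  set c₂ : ℝ := max (4 * d₂ * K * pmax * Real.sqrt 3 / r) (1 / r) with hc₂def
  have hc₁ : 0 < c₁ := lt_min (by positivity) (by positivity)
  have hc₂ : 0 < c₂ := lt_of_lt_of_le (by positivity) (le_max_right _ _)
  refine ⟨c₁, c₂, hc₁, hc₂, ?_⟩
  rintro t ⟨m, rfl⟩ -
  -- basic probability identifications
  have hpL' : (μ (X 0 ⁻¹' {x | x < a})).toReal = pL := by rw [hpL]; rfl
  have hpU' : (μ (X 0 ⁻¹' {x | b < x})).toReal = pU := by rw [hpU]; rfl
  have hpL0 : 0 ≤ pL := by rw [hpL]; exact ENNReal.toReal_nonneg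
  have hpU0 : 0 ≤ pU := by rw [hpU]; exact ENNReal.toReal_nonneg
  have hpLpm : pL ≤ pmax := by rw [hpmax]; exact le_max_left _ _
  have hpUpm : pU ≤ pmax := by rw [hpmax]; exact le_max_right _ _
  have hSa : MeasurableSet {x : ℝ | x < a} := measurableSet_Iio
  have hSb : MeasurableSet {x : ℝ | b < x} := measurableSet_Ioi
  have hEE := errorEvent_eq X a b (rfl : 2 * m + 1 = 2 * m + 1)
  set t : ℕ := 2 * m + 1 with htdef
  have htpos : (0:ℝ) < (t:ℝ) := by positivity
  have hst : 0 < Real.sqrt t := Real.sqrt_pos.mpr htpos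
  -- the key power identity
  have hrt : r ^ t = (4 * (pmax * qm)) ^ m * r := by
    rw [htdef, ← hr2, pow_succ, pow_mul]
  -- LOWER BOUND
  have hlow : c₁ / Real.sqrt t * r ^ t ≤ (μ (errorEvent X a b t)).toReal := by
    have hmain : ∀ (P : ℝ → Prop) [DecidablePred P], MeasurableSet {x | P x} →
        (μ (X 0 ⁻¹' {x | P x})).toReal = pmax →
        {ω | (Finset.univ.filter (fun i : Fin t => P (X i ω))).card = m + 1}
          ⊆ errorEvent X a b t →
        c₁ / Real.sqrt t * r ^ t ≤ (μ (errorEvent X a b t)).toReal := by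
      intro P instP hS hP hsub
      have hval := count_eq_real μ X hmeas hindep hident t (m + 1) P hS
      rw [hP, show t - (m + 1) = m from by omega] at hval
      have hmono : (μ {ω | (Finset.univ.filter (fun i : Fin t => P (X i ω))).card = m + 1}).toReal
          ≤ (μ (errorEvent X a b t)).toReal :=
        ENNReal.toReal_mono (measure_ne_top μ _) (measure_mono hsub)
      refine le_trans ?_ (le_trans (le_of_eq hval.symm) hmono)
      -- pure analysis: c₁/√t * r^t ≤ C(t,m+1) * pmax^(m+1) * qm^m
      rcases Nat.eq_zero_or_pos m with hm0 | hm1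
      · subst hm0
        have h1 : c₁ ≤ pmax / r := min_le_right _ _
        have ht1 : ((t:ℕ):ℝ) = 1 := by rw [htdef]; norm_num
        have hgoal : c₁ / Real.sqrt t * r ^ t = c₁ * r := by
          rw [ht1, Real.sqrt_one, htdef]; norm_num
        rw [hgoal]
        have hstep : c₁ * r ≤ pmax := by
          calc c₁ * r ≤ (pmax / r) * r := by gcongr
            _ = pmax := by field_simp
        refine le_trans hstep (le_of_eq ?_)
        rw [htdef]
        norm_num
      · have hCB := centralBinom_lower m hm1
        have hCC : (m.centralBinom : ℝ) ≤ ((2 * m + 1).choose (m + 1) : ℝ) := by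
          exact_mod_cast choose_odd_ge m
        have hm' : (0:ℝ) < (m:ℝ) := by exact_mod_cast hm1
        have hsm : 0 < Real.sqrt m := Real.sqrt_pos.mpr hm'
        have hsmt : Real.sqrt m ≤ Real.sqrt t := by
          apply Real.sqrt_le_sqrt; exact_mod_cast Nat.le_of_lt (by omega)
        calc c₁ / Real.sqrt t * r ^ t
            ≤ (d₁ * pmax / r) / Real.sqrt t * r ^ t := by
              gcongr; exact min_le_left _ _
          _ ≤ (d₁ * pmax / r) / Real.sqrt m * r ^ t := by gcongr
          _ = d₁ * (4 ^ m / Real.sqrt m) * (pmax ^ (m + 1) * qm ^ m) := by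
              rw [hrt, mul_pow, mul_pow, pow_succ]
              field_simp
          _ ≤ (m.centralBinom : ℝ) * (pmax ^ (m + 1) * qm ^ m) := by
              apply mul_le_mul_of_nonneg_right hCB
              positivity
          _ ≤ ((2 * m + 1).choose (m + 1) : ℝ) * (pmax ^ (m + 1) * qm ^ m) := by
              apply mul_le_mul_of_nonneg_right hCC
              positivity
          _ = ((t:ℕ).choose (m + 1) : ℝ) * pmax ^ (m + 1) * qm ^ m := by
              rw [htdef]; ring
    rcases le_total pU pL with hcase | hcase
    · have hPmax : (μ (X 0 ⁻¹' {x | x < a})).toReal = pmax := by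
        rw [hpL', hpmax, max_eq_left hcase]
      refine hmain (fun x => x < a) hSa hPmax ?_
      intro ω hω
      rw [hEE]
      left
      simp only [Set.mem_setOf_eq] at hω ⊢
      omega
    · have hPmax : (μ (X 0 ⁻¹' {x | b < x})).toReal = pmax := by
        rw [hpU', hpmax, max_eq_right hcase]
      refine hmain (fun x => b < x) hSb hPmax ?_
      intro ω hω
      rw [hEE]
      right
      simp only [Set.mem_setOf_eq] at hω ⊢
      omega
  -- UPPER BOUND
  have hup : (μ (errorEvent X a b t)).toReal ≤ c₂ / Real.sqrt t * r ^ t := by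
    rcases Nat.eq_zero_or_pos m with hm0 | hm1
    · subst hm0
      have h1 : (μ (errorEvent X a b t)).toReal ≤ 1 := by
        rw [← ENNReal.toReal_one]
        exact ENNReal.toReal_mono (by simp) prob_le_one
      have h2 : (1:ℝ) / r ≤ c₂ := le_max_right _ _
      have ht1 : ((t:ℕ):ℝ) = 1 := by rw [htdef]; norm_num
      have hgoal : c₂ / Real.sqrt t * r ^ t = c₂ * r := by
        rw [ht1, Real.sqrt_one, htdef]; norm_num
      rw [hgoal]
      calc (μ (errorEvent X a b t)).toReal ≤ 1 := h1
        _ = (1 / r) * r := by field_simp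
        _ ≤ c₂ * r := by gcongr
    · -- branch bound
      have hm' : (0:ℝ) < (m:ℝ) := by exact_mod_cast hm1
      have hsm : 0 < Real.sqrt m := Real.sqrt_pos.mpr hm'
      have hbr : ∀ (P : ℝ → Prop) [DecidablePred P], MeasurableSet {x | P x} →
          (0 ≤ (μ (X 0 ⁻¹' {x | P x})).toReal) →
          ((μ (X 0 ⁻¹' {x | P x})).toReal ≤ pmax) →
          (μ {ω | m + 1 ≤ (Finset.univ.filter (fun i : Fin t => P (X i ω))).card}).toReal
            ≤ (2 * d₂ * K * pmax * Real.sqrt 3 / r) / Real.sqrt t * r ^ t := by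
        intro P instP hS hp0 hppm
        refine le_trans (branch_tail_real μ X hmeas hindep hident m P hS) ?_
        refine le_trans (binom_tail_le m _ pmax hp0 hppm hpmax1) ?_
        rw [← hKdef, ← hqmdef]
        have hCC : ((2 * m + 1).choose (m + 1) : ℝ) ≤ 2 * (m.centralBinom : ℝ) := by
          exact_mod_cast choose_odd_le m
        have hCB := centralBinom_upper m hm1
        have hsmt : Real.sqrt t ≤ Real.sqrt 3 * Real.sqrt m := by
          rw [← Real.sqrt_mul (by norm_num : (0:ℝ) ≤ 3)]
          apply Real.sqrt_le_sqrt
          rw [htdef]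
          push_cast
          have : (1:ℝ) ≤ (m:ℝ) := by exact_mod_cast hm1
          nlinarith
        calc K * ((2 * m + 1).choose (m + 1) : ℝ) * (pmax ^ (m + 1) * qm ^ m)
            ≤ K * (2 * (m.centralBinom : ℝ)) * (pmax ^ (m + 1) * qm ^ m) := by
              gcongr
          _ ≤ K * (2 * (d₂ * (4 ^ m / Real.sqrt m))) * (pmax ^ (m + 1) * qm ^ m) := by
              have h4 : (m.centralBinom : ℝ) ≤ d₂ * (4 ^ m / Real.sqrt m) := by
                rw [hd₂def]; exact hCB
              gcongr
          _ = (2 * d₂ * K * pmax / r) / Real.sqrt m * r ^ t := by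
              rw [hrt, mul_pow, mul_pow, pow_succ]
              field_simp
          _ ≤ (2 * d₂ * K * pmax * Real.sqrt 3 / r) / Real.sqrt t * r ^ t := by
              have hle : (2 * d₂ * K * pmax / r) / Real.sqrt m
                  ≤ (2 * d₂ * K * pmax * Real.sqrt 3 / r) / Real.sqrt t := by
                rw [div_le_div_iff₀ hsm hst]
                have hX : (0:ℝ) ≤ 2 * d₂ * K * pmax / r := by positivity
                calc (2 * d₂ * K * pmax / r) * Real.sqrt t
                    ≤ (2 * d₂ * K * pmax / r) * (Real.sqrt 3 * Real.sqrt m) :=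
                      mul_le_mul_of_nonneg_left hsmt hX
                  _ = (2 * d₂ * K * pmax * Real.sqrt 3 / r) * Real.sqrt m := by
                      field_simp
              apply mul_le_mul_of_nonneg_right hle
              positivity
      have hAB : (μ (errorEvent X a b t)).toReal
          ≤ (μ {ω | m + 1 ≤ (Finset.univ.filter (fun i : Fin t => X i ω < a)).card}).toReal
            + (μ {ω | m + 1 ≤ (Finset.univ.filter (fun i : Fin t => b < X i ω)).card}).toReal := by
        have h1 : μ (errorEvent X a b t)
            ≤ μ {ω | m + 1 ≤ (Finset.univ.filter (fun i : Fin t => X i ω < a)).card}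
              + μ {ω | m + 1 ≤ (Finset.univ.filter (fun i : Fin t => b < X i ω)).card} := by
          rw [hEE]
          exact measure_union_le _ _
        refine le_trans (ENNReal.toReal_mono ?_ h1) ?_
        · exact ENNReal.add_ne_top.mpr ⟨measure_ne_top μ _, measure_ne_top μ _⟩
        · rw [ENNReal.toReal_add (measure_ne_top μ _) (measure_ne_top μ _)]
      have hA := hbr (fun x => x < a) hSa (by rw [hpL']; exact hpL0) (by rw [hpL']; exact hpLpm)
      have hB := hbr (fun x => b < x) hSb (by rw [hpU']; exact hpU0) (by rw [hpU']; exact hpUpm)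
      refine le_trans hAB (le_trans (add_le_add hA hB) ?_)
      have hc2 : 4 * d₂ * K * pmax * Real.sqrt 3 / r ≤ c₂ := le_max_left _ _
      calc (2 * d₂ * K * pmax * Real.sqrt 3 / r) / Real.sqrt t * r ^ t
            + (2 * d₂ * K * pmax * Real.sqrt 3 / r) / Real.sqrt t * r ^ t
          = (4 * d₂ * K * pmax * Real.sqrt 3 / r) / Real.sqrt t * r ^ t := by ring
        _ ≤ c₂ / Real.sqrt t * r ^ t := by gcongr
  exact ⟨hlow, hup⟩
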